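/- Let m be a positive integer, let q = 2^{3m}, and fix δ ∈ F_q. Let s be a positive integer such that either s = 2^{2m}+1, or s = 2^{im−1} + 2^{m−1} for some i ∈ {2,3} with gcd((i−1)m − 1, 3m) = 1. Then the polynomial map F(x) = (x^{2^m} + x + δ)^s + x is a permutation of F_q (i.e., x ↦ F(x) is a bijection of F_q). -/

import Mathlib

lemma auxMod7 (m : ℕ) : 2 ^ m % 7 = 2 ^ (m % 3) % 7 := by
  conv_lhs => rw [← Nat.div_add_mod m 3, pow_add, pow_mul]
  rw [Nat.mul_mod, Nat.pow_mod]
  norm_num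

lemma auxOrd {F : Type*} [Field F] (P e : ℕ) (htwo : (2:F) = 0) (w : F)
    (hw0 : w ≠ 0) (hw3 : w^3 + w + 1 = 0) (hwP : w ^ P = w ^ e) :
    P ≡ e [MOD 7] := by
  have hw7 : w ^ 7 = 1 := by
    linear_combination (1 + w + w^2 + w^4) * hw3 + (-1 - w - w^2 - w^3 - w^4 - w^5) * htwo
  have hw1 : w ≠ 1 := by
    intro h
    rw [h] at hw3
    exact one_ne_zero (α := F) (by linear_combination hw3 - htwo)
  set u : Fˣ := Units.mk0 w hw0 with hu
  have hu7 : u ^ 7 = 1 := by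
    apply Units.ext
    simpa [hu] using hw7
  have hord : orderOf u = 7 := by
    have hdvd : orderOf u ∣ 7 := orderOf_dvd_of_pow_eq_one hu7
    rcases (Nat.Prime.eq_one_or_self_of_dvd (by norm_num : Nat.Prime 7) _ hdvd) with h | h
    · exfalso
      have h1 : u = 1 := orderOf_eq_one_iff.mp h
      apply hw1
      simpa [hu] using congrArg Units.val h1
    · exact h
  have hupow : u ^ P = u ^ e := by
    apply Units.ext
    simpa [hu] using hwP
  have := pow_eq_pow_iff_modEq.mp hupow
  rwa [hord] at this

lemma aux2 {F : Type*} [Field F] (P : ℕ) (hPne : P ≠ 0) (htwo : (2:F) = 0)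
    (hadd : ∀ a b : F, (a + b) ^ P = a ^ P + b ^ P)
    (hcomm : ∀ a : F, (a ^ 2) ^ P = (a ^ P) ^ 2)
    (C D D1 D2 : F) (h1 : D ^ P = D1) (h2 : D1 ^ P = D2) (h3 : D2 ^ P = D)
    (hC : C ^ P = C) (hkey : D1^2 + C*D + C*D1 = 0) :
    D = 0 ∨ ∃ w : F, w ≠ 0 ∧ w^3 + w + 1 = 0 ∧ w ^ P = w ^ 2 := by
  by_cases hc : C = 0
  · left
    have hD1sq : D1 ^ 2 = 0 := by linear_combination hkey - (D + D1) * hc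
    have hD1z : D1 = 0 := pow_eq_zero_iff (two_ne_zero) |>.mp hD1sq
    have hD2z : D2 = 0 := by rw [← h2, hD1z]; exact zero_pow hPne
    rw [← h3, hD2z]; exact zero_pow hPne
  · have hR2 := congrArg (fun z : F => z ^ P) hkey
    simp only [hadd, mul_pow, hcomm, h1, h2, h3, hC, zero_pow hPne] at hR2
    have hR3 := congrArg (fun z : F => z ^ P) hR2
    simp only [hadd, mul_pow, hcomm, h1, h2, h3, hC, zero_pow hPne] at hR3
    -- hR2 : D2^2 + C*D1 + C*D2 = 0 ; hR3 : D^2 + C*D2 + C*D = 0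
    have hRA : D^4 + C^3*D1 + C^3*D = 0 := by
      linear_combination (C^2) * hR2 + (C*D - C*D2 - C^2 + D^2) * hR3 + (-(C*D^3) + C^3*D) * htwo
    have hRB : D^8 + C^4*D^4 + C^6*D^2 = 0 := by
      linear_combination (C^6) * hkey + (C^3*D - C^3*D1 + C^4 + D^4) * hRA + (-(C^3*D^5) - C^7*D - C^7*D1) * htwo
    have hfac : D^2 * (D^3 + C^2*D + C^3)^2 = 0 := by
      linear_combination hRB + (C^2*D^6 + C^3*D^5 + C^5*D^3) * htwo
    rcases mul_eq_zero.mp hfac with h | h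
    · left; exact pow_eq_zero_iff (two_ne_zero) |>.mp h
    · have hcub : D^3 + C^2*D + C^3 = 0 := pow_eq_zero_iff (two_ne_zero) |>.mp h
      by_cases hd : D = 0
      · left; exact hd
      · right
        have hstep : C^2 * (C*D1) = C^2 * D^2 := by linear_combination hRA - D * hcub
        have hcd1 : C*D1 = D^2 := mul_left_cancel₀ (pow_ne_zero 2 hc) hstep
        refine ⟨D / C, div_ne_zero hd hc, ?_, ?_⟩
        · have heq : (D/C)^3 + D/C + 1 = (D^3 + C^2*D + C^3)/C^3 := by
            field_simp
          rw [heq, hcub, zero_div]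
        · rw [div_pow, div_pow, h1, hC, div_eq_div_iff hc (pow_ne_zero 2 hc)]
          linear_combination C * hcd1

lemma aux3 {F : Type*} [Field F] (P : ℕ) (hPne : P ≠ 0) (htwo : (2:F) = 0)
    (hadd : ∀ a b : F, (a + b) ^ P = a ^ P + b ^ P)
    (hcomm : ∀ a : F, (a ^ 2) ^ P = (a ^ P) ^ 2)
    (C D D1 D2 : F) (h1 : D ^ P = D1) (h2 : D1 ^ P = D2) (h3 : D2 ^ P = D)
    (hC : C ^ P = C) (hTr : D + D1 + D2 = 0) (hkey : D1^2 + C*D1 + D^2 = 0) :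
    D = 0 ∨ ∃ w : F, w ≠ 0 ∧ w^3 + w + 1 = 0 ∧ w ^ P = w ^ 4 := by
  by_cases hc : C = 0
  · left
    have hDD1 : (D + D1)^2 = 0 := by linear_combination hkey - D1 * hc + D*D1 * htwo
    have hsum : D + D1 = 0 := pow_eq_zero_iff (two_ne_zero) |>.mp hDD1
    have hD1D : D1 = D := by linear_combination hsum - D * htwo
    have hD2D : D2 = D := by rw [← h2, hD1D, h1]; exact hD1D
    rw [hD1D, hD2D] at hTr
    linear_combination hTr - D * htwo
  · have hR2 := congrArg (fun z : F => z ^ P) hkey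
    simp only [hadd, mul_pow, hcomm, h1, h2, h3, hC, zero_pow hPne] at hR2
    -- hR2 : D2^2 + C*D2 + D1^2 = 0
    have hb : C*D1 + D^2 + C*D = 0 := by
      linear_combination hR2 + (-C - D - D1 + D2) * hTr + (C*D + C*D1 + D*D1 + D^2 - D2^2) * htwo
    have hquart : D * (D^3 + C^2*D + C^3) = 0 := by
      linear_combination (C^2) * hkey + (-(C*D) + C*D1 - C^2 - D^2) * hb + (C*D^3 + C^2*D^2 - C^2*D1^2 + C^3*D + D^4) * htwo
    rcases mul_eq_zero.mp hquart with h | h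
    · left; exact h
    · have hcub : D^3 + C^2*D + C^3 = 0 := h
      by_cases hd : D = 0
      · left; exact hd
      · right
        have hcd4 : C^3*D1 = D^4 := by linear_combination (C^2) * hb + (-D) * hcub
        refine ⟨D / C, div_ne_zero hd hc, ?_, ?_⟩
        · have heq : (D/C)^3 + D/C + 1 = (D^3 + C^2*D + C^3)/C^3 := by
            field_simp
          rw [heq, hcub, zero_div]
        · rw [div_pow, div_pow, h1, hC, div_eq_div_iff hc (pow_ne_zero 4 hc)]
          linear_combination C * hcd4

theorem stmt_0 (m : ℕ) (hm : 0 < m) (F : Type*) [Field F] [Fintype F]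
    (hF : Fintype.card F = 2 ^ (3 * m)) (δ : F) (s : ℕ) (hs : 0 < s)
    (h : s = 2 ^ (2 * m) + 1 ∨
      ∃ i, (i = 2 ∨ i = 3) ∧ s = 2 ^ (i * m - 1) + 2 ^ (m - 1) ∧
        Nat.gcd ((i - 1) * m - 1) (3 * m) = 1) :
    Function.Bijective (fun x : F => (x ^ (2 ^ m) + x + δ) ^ s + x) := by
  haveI hchar : CharP F 2 := by
    have h1 : CharP F (ringChar F) := ringChar.charP F
    have hp : (ringChar F).Prime := CharP.char_is_prime F (ringChar F)
    obtain ⟨n, hn⟩ := FiniteField.card F (ringChar F)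
    have hd : ringChar F ∣ 2 := by
      have : ringChar F ∣ 2 ^ (3 * m) := by
        rw [← hF, hn.2]; exact dvd_pow_self _ n.pos.ne'
      exact hp.dvd_of_dvd_pow this
    have h2 : ringChar F = 2 :=
      (Nat.prime_two.eq_one_or_self_of_dvd _ hd).resolve_left hp.one_lt.ne'
    rwa [h2] at h1
  haveI := Fact.mk Nat.prime_two
  have htwo : (2 : F) = 0 := by exact_mod_cast CharP.cast_eq_zero F 2
  rw [← Finite.injective_iff_bijective]
  intro x y hxy
  have hE0 : (x ^ (2 ^ m) + x + δ) ^ s + x = (y ^ (2 ^ m) + y + δ) ^ s + y := hxy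
  clear hxy
  set P := 2 ^ m with hP
  have hPne : P ≠ 0 := by rw [hP]; positivity
  have hadd : ∀ a b : F, (a + b) ^ P = a ^ P + b ^ P := fun a b => add_pow_char_pow a b 2 m
  have hsq2 : ∀ a b : F, (a + b) ^ 2 = a ^ 2 + b ^ 2 := fun a b => add_pow_char a b 2
  have hcomm : ∀ a : F, (a ^ 2) ^ P = (a ^ P) ^ 2 := fun a => by
    rw [← pow_mul, mul_comm, pow_mul]
  have hPP : P * P = 2 ^ (2 * m) := by rw [hP, ← pow_add, two_mul]
  have hcard : ∀ a : F, ((a ^ P) ^ P) ^ P = a := by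
    intro a
    rw [← pow_mul, ← pow_mul]
    have h3 : P * (P * P) = Fintype.card F := by
      rw [hF, hP, ← pow_add, ← pow_add]; congr 1; ring
    rw [h3, FiniteField.pow_card]
  rcases h with hs1 | ⟨i, hi, hsi, hgcd⟩
  · -- case s = 2^(2m)+1
    have hus : ∀ a : F, a ^ s = ((a ^ P) ^ P) * a := by
      intro a
      rw [hs1, pow_add, pow_one, ← hPP, pow_mul]
    simp only [hus] at hE0
    simp only [hadd, mul_pow, hcard] at hE0
    have hE2 := congrArg (fun z : F => z ^ P) hE0
    simp only [hadd, mul_pow, hcard] at hE2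
    obtain ⟨x1, hx1⟩ : ∃ a : F, x ^ P = a := ⟨_, rfl⟩
    obtain ⟨y1, hy1⟩ : ∃ a : F, y ^ P = a := ⟨_, rfl⟩
    obtain ⟨δ1, hδ1⟩ : ∃ a : F, δ ^ P = a := ⟨_, rfl⟩
    simp only [hx1, hy1, hδ1] at hE0 hE2
    obtain ⟨x2, hx2⟩ : ∃ a : F, x1 ^ P = a := ⟨_, rfl⟩
    obtain ⟨y2, hy2⟩ : ∃ a : F, y1 ^ P = a := ⟨_, rfl⟩
    obtain ⟨δ2, hδ2⟩ : ∃ a : F, δ1 ^ P = a := ⟨_, rfl⟩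
    simp only [hx2, hy2, hδ2] at hE0 hE2
    have hx3 : x2 ^ P = x := by rw [← hx2, ← hx1]; exact hcard x
    have hy3 : y2 ^ P = y := by rw [← hy2, ← hy1]; exact hcard y
    have hδ3 : δ2 ^ P = δ := by rw [← hδ2, ← hδ1]; exact hcard δ
    have hfdd : (x1 + x + y1 + y) ^ P = x2 + x1 + y2 + y1 := by
      rw [hadd, hadd, hadd, hx1, hx2, hy1, hy2]
    have hfd1 : (x2 + x1 + y2 + y1) ^ P = x + x2 + y + y2 := by
      rw [hadd, hadd, hadd, hx2, hx3, hy2, hy3]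
    have hcP : (δ + δ1 + δ2) ^ P = δ + δ1 + δ2 := by
      rw [hadd, hadd, hδ1, hδ2, hδ3]; ring
    have key1 : (x1 + x + y1 + y) * (x1 + x + y1 + y + (δ + δ1 + δ2) + 1) = 0 := by
      linear_combination hE0 + hE2 + (-(δ*x2) + δ*y + δ*y1 + δ*y2 + δ1*y + δ1*y1 + δ2*y + δ2*y1 - x*x2 + x*y + x*y1 - x1*x2 + x1*y + x1*y1 + y + 2*y*y1 + y*y2 + y^2 + y1 + y1*y2 + y1^2) * htwo
    have hd0 : x1 + x + y1 + y = 0 := by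
      rcases mul_eq_zero.mp key1 with h | h
      · exact h
      · have hdc : x1 + x + y1 + y = δ + δ1 + δ2 + 1 := by
          linear_combination h - (δ + δ1 + δ2 + 1) * htwo
        have hfd2' : x2 + x1 + y2 + y1 = δ + δ1 + δ2 + 1 := by
          rw [← hfdd, hdc, hadd, hcP, one_pow]
        have hffd' : x + x2 + y + y2 = δ + δ1 + δ2 + 1 := by
          rw [← hfd1, hfd2', hadd, hcP, one_pow]
        have htr : (x1 + x + y1 + y) + (x2 + x1 + y2 + y1) + (x + x2 + y + y2) = 0 := by
          linear_combination (x + x1 + x2 + y + y1 + y2) * htwo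
        linear_combination htr - hfd2' - hffd' - (δ + δ1 + δ2 + 1) * htwo
    have hd1z : x2 + x1 + y2 + y1 = 0 := by
      rw [← hfdd, hd0]; exact zero_pow hPne
    have hd2z : x + x2 + y + y2 = 0 := by
      rw [← hfd1, hd1z]; exact zero_pow hPne
    linear_combination hE0 + (-δ2 - x - x2) * hd0 + (-δ - y - y1) * hd2z + (δ*y + δ*y2 + δ2*y + δ2*y1 + x*y + x*y1 + x2*y + x2*y1 + y*y1 + y*y2 + y^2 + y1*y2) * htwo
  · rcases hi with rfl | rfl
    · -- i = 2
      norm_num at hgcd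
      have hnat : s * 2 = P * P + P := by
        have e1 : 2*m - 1 + 1 = m + m := by omega
        have e2 : m - 1 + 1 = m := by omega
        rw [hsi, hP, add_mul, ← pow_succ, ← pow_succ, e1, e2, pow_add]
      have h2s : ∀ a : F, (a ^ s) ^ 2 = ((a ^ P) ^ P) * a ^ P := by
        intro a
        rw [← pow_mul, hnat, pow_add, pow_mul]
      have hE1 := congrArg (fun z : F => z ^ 2) hE0
      simp only [hsq2, h2s] at hE1
      simp only [hadd, mul_pow, hcard] at hE1
      have hE2 := congrArg (fun z : F => z ^ P) hE1
      simp only [hadd, mul_pow, hcomm, hcard] at hE2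
      obtain ⟨x1, hx1⟩ : ∃ a : F, x ^ P = a := ⟨_, rfl⟩
      obtain ⟨y1, hy1⟩ : ∃ a : F, y ^ P = a := ⟨_, rfl⟩
      obtain ⟨δ1, hδ1⟩ : ∃ a : F, δ ^ P = a := ⟨_, rfl⟩
      simp only [hx1, hy1, hδ1] at hE1 hE2
      obtain ⟨x2, hx2⟩ : ∃ a : F, x1 ^ P = a := ⟨_, rfl⟩
      obtain ⟨y2, hy2⟩ : ∃ a : F, y1 ^ P = a := ⟨_, rfl⟩
      obtain ⟨δ2, hδ2⟩ : ∃ a : F, δ1 ^ P = a := ⟨_, rfl⟩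
      simp only [hx2, hy2, hδ2] at hE1 hE2
      have hx3 : x2 ^ P = x := by rw [← hx2, ← hx1]; exact hcard x
      have hy3 : y2 ^ P = y := by rw [← hy2, ← hy1]; exact hcard y
      have hδ3 : δ2 ^ P = δ := by rw [← hδ2, ← hδ1]; exact hcard δ
      have hfdd : (x1 + x + y1 + y) ^ P = x2 + x1 + y2 + y1 := by
        rw [hadd, hadd, hadd, hx1, hx2, hy1, hy2]
      have hfd1 : (x2 + x1 + y2 + y1) ^ P = x + x2 + y + y2 := by
        rw [hadd, hadd, hadd, hx2, hx3, hy2, hy3]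
      have hfd2 : (x + x2 + y + y2) ^ P = x1 + x + y1 + y := by
        rw [hadd, hadd, hadd, hx1, hx3, hy1, hy3]
      have hcP : (δ + δ1 + δ2) ^ P = δ + δ1 + δ2 := by
        rw [hadd, hadd, hδ1, hδ2, hδ3]; ring
      have key2 : (x2+x1+y2+y1)^2 + (δ+δ1+δ2)*(x1+x+y1+y) + (δ+δ1+δ2)*(x2+x1+y2+y1) = 0 := by
        linear_combination hE1 + hE2 + (δ*x1 + δ*y + δ*y1 + δ*y2 + δ1*x1 + δ1*y + δ1*y1 + δ1*y2 + δ2*y + 2*δ2*y1 + δ2*y2 - x*x1 - x*x2 - x^2 + x1*y1 + x1*y2 + x2*y1 + x2*y2 + y*y1 + y*y2 + y^2 + 2*y1*y2 + y1^2 + y2^2) * htwo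
      rcases aux2 P hPne htwo hadd hcomm (δ+δ1+δ2) (x1+x+y1+y) (x2+x1+y2+y1) (x+x2+y+y2)
        hfdd hfd1 hfd2 hcP key2 with hd0 | ⟨w, hw0, hw3, hwP⟩
      · have hd1z : x2+x1+y2+y1 = 0 := by rw [← hfdd, hd0]; exact zero_pow hPne
        have hd2z : x+x2+y+y2 = 0 := by rw [← hfd1, hd1z]; exact zero_pow hPne
        have hxy2 : (x + y)^2 = 0 := by
          linear_combination hE1 + (-δ2 - x - x2) * hd1z + (-δ1 - y1 - y2) * hd2z + (δ1*y + δ1*y2 + δ2*y1 + δ2*y2 + x*y + x*y1 + x*y2 + x2*y1 + x2*y2 + y*y1 + y*y2 + y^2 + y1*y2 + y2^2) * htwo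
        have hxy : x + y = 0 := pow_eq_zero_iff two_ne_zero |>.mp hxy2
        linear_combination hxy - y * htwo
      · have hmod : 2^m ≡ 2 [MOD 7] := by
          have h' := auxOrd P 2 htwo w hw0 hw3 hwP
          rwa [hP] at h'
        have h7 : 2 ^ (m % 3) % 7 = 2 % 7 := by rw [← auxMod7]; exact hmod
        have hm3 : m % 3 = 1 := by
          have h0 : m % 3 = 0 ∨ m % 3 = 1 ∨ m % 3 = 2 := by omega
          rcases h0 with h0 | h0 | h0
          · rw [h0] at h7; norm_num at h7
          · exact h0
          · rw [h0] at h7; norm_num at h7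
        have hdvd : (3:ℕ) ∣ Nat.gcd (m - 1) (3 * m) := Nat.dvd_gcd (by omega) (by omega)
        rw [hgcd] at hdvd
        exact absurd hdvd (by norm_num)
    · -- i = 3
      norm_num at hgcd
      have hnat : s * 2 = P * (P * P) + P := by
        have e1 : 3*m - 1 + 1 = m + (m + m) := by omega
        have e2 : m - 1 + 1 = m := by omega
        rw [hsi, hP, add_mul, ← pow_succ, ← pow_succ, e1, e2, pow_add, pow_add]
      have h2s : ∀ a : F, (a ^ s) ^ 2 = a * a ^ P := by
        intro a
        rw [← pow_mul, hnat, pow_add, pow_mul, pow_mul, hcard]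
      have hE1 := congrArg (fun z : F => z ^ 2) hE0
      simp only [hsq2, h2s] at hE1
      simp only [hadd, mul_pow, hcard] at hE1
      have hE2 := congrArg (fun z : F => z ^ P) hE1
      simp only [hadd, mul_pow, hcomm, hcard] at hE2
      obtain ⟨x1, hx1⟩ : ∃ a : F, x ^ P = a := ⟨_, rfl⟩
      obtain ⟨y1, hy1⟩ : ∃ a : F, y ^ P = a := ⟨_, rfl⟩
      obtain ⟨δ1, hδ1⟩ : ∃ a : F, δ ^ P = a := ⟨_, rfl⟩
      simp only [hx1, hy1, hδ1] at hE1 hE2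
      obtain ⟨x2, hx2⟩ : ∃ a : F, x1 ^ P = a := ⟨_, rfl⟩
      obtain ⟨y2, hy2⟩ : ∃ a : F, y1 ^ P = a := ⟨_, rfl⟩
      obtain ⟨δ2, hδ2⟩ : ∃ a : F, δ1 ^ P = a := ⟨_, rfl⟩
      simp only [hx2, hy2, hδ2] at hE1 hE2
      have hx3 : x2 ^ P = x := by rw [← hx2, ← hx1]; exact hcard x
      have hy3 : y2 ^ P = y := by rw [← hy2, ← hy1]; exact hcard y
      have hδ3 : δ2 ^ P = δ := by rw [← hδ2, ← hδ1]; exact hcard δ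
      have hfdd : (x1 + x + y1 + y) ^ P = x2 + x1 + y2 + y1 := by
        rw [hadd, hadd, hadd, hx1, hx2, hy1, hy2]
      have hfd1 : (x2 + x1 + y2 + y1) ^ P = x + x2 + y + y2 := by
        rw [hadd, hadd, hadd, hx2, hx3, hy2, hy3]
      have hfd2 : (x + x2 + y + y2) ^ P = x1 + x + y1 + y := by
        rw [hadd, hadd, hadd, hx1, hx3, hy1, hy3]
      have hcP : (δ + δ1 + δ2) ^ P = δ + δ1 + δ2 := by
        rw [hadd, hadd, hδ1, hδ2, hδ3]; ring
      have hTr : (x1+x+y1+y) + (x2+x1+y2+y1) + (x+x2+y+y2) = 0 := by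
        linear_combination (x + x1 + x2 + y + y1 + y2) * htwo
      have key3 : (x2+x1+y2+y1)^2 + (δ+δ1+δ2)*(x2+x1+y2+y1) + (x1+x+y1+y)^2 = 0 := by
        linear_combination hE1 + hE2 + (δ*y1 + δ*y2 - δ1*x + δ1*y + δ1*y1 + δ1*y2 + δ2*y1 + δ2*y2 - x*x2 + x*y + x*y1 + x1*y + 2*x1*y1 + x1*y2 + x2*y1 + x2*y2 + 2*y*y1 + y*y2 + y^2 + 2*y1*y2 + 2*y1^2 + y2^2) * htwo
      rcases aux3 P hPne htwo hadd hcomm (δ+δ1+δ2) (x1+x+y1+y) (x2+x1+y2+y1) (x+x2+y+y2)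
        hfdd hfd1 hfd2 hcP hTr key3 with hd0 | ⟨w, hw0, hw3, hwP⟩
      · have hd1z : x2+x1+y2+y1 = 0 := by rw [← hfdd, hd0]; exact zero_pow hPne
        have hxy2 : (x + y)^2 = 0 := by
          linear_combination hE1 + (-δ1 - x1 - x2) * hd0 + (-δ - y - y1) * hd1z + (δ*y1 + δ*y2 + δ1*y + δ1*y1 + x*y + x1*y + x1*y1 + x2*y + x2*y1 + y*y1 + y*y2 + y^2 + y1*y2 + y1^2) * htwo
        have hxy : x + y = 0 := pow_eq_zero_iff two_ne_zero |>.mp hxy2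
        linear_combination hxy - y * htwo
      · have hmod : 2^m ≡ 4 [MOD 7] := by
          have h' := auxOrd P 4 htwo w hw0 hw3 hwP
          rwa [hP] at h'
        have h7 : 2 ^ (m % 3) % 7 = 4 % 7 := by rw [← auxMod7]; exact hmod
        have hm3 : m % 3 = 2 := by
          have h0 : m % 3 = 0 ∨ m % 3 = 1 ∨ m % 3 = 2 := by omega
          rcases h0 with h0 | h0 | h0
          · rw [h0] at h7; norm_num at h7
          · rw [h0] at h7; norm_num at h7
          · exact h0
        have hdvd : (3:ℕ) ∣ Nat.gcd (2 * m - 1) (3 * m) := Nat.dvd_gcd (by omega) (by omega)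
        rw [hgcd] at hdvd
        exact absurd hdvd (by norm_num)
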